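/- Let V be a vector space over a field k and let T : V → V be a linear map. Suppose there is an increasing chain of finite-dimensional T-invariant subspaces V₁ ⊆ V₂ ⊆ ... whose union is V, and suppose k is algebraically closed. Then V admits a basis v₀, v₁, v₂, ... (indexed by an initial segment of the ordinals, or ℕ if V is countable-dimensional) with respect to which T is triangular, i.e., T(vᵢ) ∈ span(v₀, ..., vᵢ) for all i. -/

import Mathlib

universe u v

open Submodule

section Aux

variable {k : Type u} {V : Type v} [Field k] [IsAlgClosed k]
    [AddCommGroup V] [Module k V]

/-- Step lemma: given invariant subspaces `U ≤ M` with `M` finite dimensional and `M ≰ U`,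
there is `v ∈ M`, `v ∉ U` with `T v ∈ U ⊔ span {v}` (lift of an eigenvector in `M ⧸ U`). -/
lemma stmt7_step (T : V →ₗ[k] V) (U M : Submodule k V) [FiniteDimensional k M]
    (hUM : U ≤ M) (hMU : ¬ M ≤ U)
    (hMinv : ∀ x ∈ M, T x ∈ M) (hUinv : ∀ x ∈ U, T x ∈ U) :
    ∃ v ∈ M, v ∉ U ∧ T v ∈ U ⊔ Submodule.span k {v} := by
  classical
  set f : M →ₗ[k] M := T.restrict hMinv with hf
  set U' : Submodule k M := U.comap M.subtype with hU'
  have hU'lt : U' < ⊤ := by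
    rcases SetLike.not_le_iff_exists.1 hMU with ⟨x, hxM, hxU⟩
    refine lt_top_iff_ne_top.2 fun h => hxU ?_
    have : (⟨x, hxM⟩ : M) ∈ U' := h ▸ Submodule.mem_top
    exact this
  have hmap : U' ≤ U'.comap f := by
    intro x hx
    have : T (x : V) ∈ U := hUinv _ hx
    simpa [hU', hf, LinearMap.restrict_apply] using this
  haveI : Nontrivial (M ⧸ U') := Submodule.Quotient.nontrivial_iff.2 hU'lt.ne
  set g : Module.End k (M ⧸ U') := Submodule.mapQ U' U' f hmap with hg
  obtain ⟨c, hc⟩ := Module.End.exists_eigenvalue g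
  obtain ⟨q, hq⟩ := hc.exists_hasEigenvector
  obtain ⟨x, hx⟩ := Submodule.Quotient.mk_surjective U' q
  refine ⟨(x : V), x.2, ?_, ?_⟩
  · intro hxU
    apply hq.2
    rw [← hx, Submodule.Quotient.mk_eq_zero]
    exact hxU
  · have happ : g (Submodule.Quotient.mk x) = c • Submodule.Quotient.mk x := by
      rw [hx]; exact hq.apply_eq_smul
    rw [hg, Submodule.mapQ_apply, ← Submodule.Quotient.mk_smul,
      Submodule.Quotient.eq] at happ
    have hmem : (T (x : V)) - c • (x : V) ∈ U := by
      exact happ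
    have : T (x : V) = ((T (x : V)) - c • (x : V)) + c • (x : V) := by abel
    rw [this]
    exact Submodule.add_mem_sup hmem
      (Submodule.smul_mem _ c (Submodule.mem_span_singleton_self _))

variable (T : V →ₗ[k] V) (W : ℕ → Submodule k V)

/-- Key extension lemma: for any finite-dimensional invariant `U` there is a vector `v ∉ U`
with `T v ∈ U ⊔ span {v}`, lying in `W n ⊔ U` where `n` is least with `¬ W n ≤ U`. -/
lemma stmt7_key
    (hfd : ∀ n, FiniteDimensional k (W n))
    (hinv : ∀ n, ∀ x ∈ W n, T x ∈ W n)
    (hunion : ⨆ n, W n = ⊤)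
    (hrank : Module.rank k V = Cardinal.aleph0)
    (U : Submodule k V) (hUfin : FiniteDimensional k U)
    (hUinv : ∀ x ∈ U, T x ∈ U) :
    ∃ v : V, v ∉ U ∧ T v ∈ U ⊔ Submodule.span k {v} ∧
      ∃ n : ℕ, v ∈ W n ⊔ U ∧ (∀ m, m < n → W m ≤ U) ∧ ¬ W n ≤ U := by
  classical
  have hex : ∃ n, ¬ W n ≤ U := by
    by_contra h
    push_neg at h
    have htop : U = ⊤ := top_unique (hunion ▸ iSup_le h)
    have : Module.rank k V < Cardinal.aleph0 := by
      have h1 : Module.rank k U < Cardinal.aleph0 := Module.rank_lt_aleph0 k U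
      rw [htop] at h1
      rwa [rank_top] at h1
    rw [hrank] at this
    exact absurd this (lt_irrefl _)
  set n := Nat.find hex with hn
  have hnle : ¬ W n ≤ U := Nat.find_spec hex
  have hmin : ∀ m, m < n → W m ≤ U := fun m hm => by
    have := Nat.find_min hex hm
    simpa using this
  set M := W n ⊔ U with hM
  haveI : FiniteDimensional k (W n) := hfd n
  haveI : FiniteDimensional k M := inferInstance
  have hUM : U ≤ M := le_sup_right
  have hMU : ¬ M ≤ U := fun h => hnle (le_trans le_sup_left h)
  have hMinv : ∀ x ∈ M, T x ∈ M := by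
    intro x hx
    have : M ≤ Submodule.comap T M := by
      refine sup_le ?_ ?_
      · intro y hy
        exact Submodule.mem_comap.2 (le_sup_left (α := Submodule k V) (hinv n y hy))
      · intro y hy
        exact Submodule.mem_comap.2 (le_sup_right (α := Submodule k V) (hUinv y hy))
    exact this hx
  obtain ⟨v, hvM, hvU, hTv⟩ := stmt7_step T U M hUM hMU hMinv hUinv
  exact ⟨v, hvU, hTv, n, hvM, hmin, hnle⟩

/-- A finite-dimensional `T`-invariant submodule. -/
structure GoodSub where
  U : Submodule k V
  fin : FiniteDimensional k U
  inv : ∀ x ∈ U, T x ∈ U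

variable (hfd : ∀ n, FiniteDimensional k (W n))
  (hinv : ∀ n, ∀ x ∈ W n, T x ∈ W n)
  (hunion : ⨆ n, W n = ⊤)
  (hrank : Module.rank k V = Cardinal.aleph0)

/-- The vector chosen to extend a good submodule. -/
noncomputable def stmt7_vec (G : GoodSub T) : V :=
  (stmt7_key T W hfd hinv hunion hrank G.U G.fin G.inv).choose

lemma stmt7_vec_spec (G : GoodSub T) :
    stmt7_vec T W hfd hinv hunion hrank G ∉ G.U ∧
    T (stmt7_vec T W hfd hinv hunion hrank G) ∈
      G.U ⊔ Submodule.span k {stmt7_vec T W hfd hinv hunion hrank G} ∧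
    ∃ n : ℕ, stmt7_vec T W hfd hinv hunion hrank G ∈ W n ⊔ G.U ∧
      (∀ m, m < n → W m ≤ G.U) ∧ ¬ W n ≤ G.U :=
  (stmt7_key T W hfd hinv hunion hrank G.U G.fin G.inv).choose_spec

/-- Extend a good submodule by the chosen vector. -/
noncomputable def stmt7_nxt (G : GoodSub T) : GoodSub T where
  U := G.U ⊔ Submodule.span k {stmt7_vec T W hfd hinv hunion hrank G}
  fin := by
    haveI := G.fin
    infer_instance
  inv := by
    obtain ⟨-, hTv, -⟩ := stmt7_vec_spec T W hfd hinv hunion hrank G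
    intro x hx
    have : G.U ⊔ Submodule.span k {stmt7_vec T W hfd hinv hunion hrank G} ≤
        Submodule.comap T (G.U ⊔ Submodule.span k {stmt7_vec T W hfd hinv hunion hrank G}) := by
      refine sup_le ?_ ?_
      · intro y hy
        exact Submodule.mem_comap.2 (le_sup_left (α := Submodule k V) (G.inv y hy))
      · rw [Submodule.span_le]
        rintro y rfl
        exact Submodule.mem_comap.2 hTv
    exact this hx

/-- The chain of good submodules. -/
noncomputable def stmt7_chain : ℕ → GoodSub T
  | 0 => ⟨⊥, inferInstance, by simp⟩
  | (i + 1) => stmt7_nxt T W hfd hinv hunion hrank (stmt7_chain i)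

end Aux

/-- over an algebraically closed field, if a countably infinite dimensional vector
space `V` is the union of an increasing chain of finite-dimensional `T`-invariant subspaces,
then `V` has a basis `(vᵢ)_{i∈ℕ}` with respect to which `T` is triangular. -/
theorem stmt7 (k : Type u) (V : Type v) [Field k] [IsAlgClosed k]
    [AddCommGroup V] [Module k V] (T : V →ₗ[k] V)
    (W : ℕ → Submodule k V) (hmono : Monotone W)
    (hfd : ∀ n, FiniteDimensional k (W n))
    (hinv : ∀ n, ∀ x ∈ W n, T x ∈ W n)
    (hunion : ⨆ n, W n = ⊤)
    (hrank : Module.rank k V = Cardinal.aleph0) :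
    ∃ b : Module.Basis ℕ k V, ∀ i : ℕ, T (b i) ∈ Submodule.span k (b '' Set.Iic i) := by
  classical
  set C : ℕ → GoodSub T := stmt7_chain T W hfd hinv hunion hrank with hC
  set U : ℕ → Submodule k V := fun i => (C i).U with hU
  set v : ℕ → V := fun i => stmt7_vec T W hfd hinv hunion hrank (C i) with hv
  have hU0 : U 0 = ⊥ := rfl
  have hUsucc : ∀ i, U (i + 1) = U i ⊔ Submodule.span k {v i} := fun i => rfl
  have hspec : ∀ i, v i ∉ U i ∧ T (v i) ∈ U i ⊔ Submodule.span k {v i} ∧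
      ∃ n : ℕ, v i ∈ W n ⊔ U i ∧ (∀ m, m < n → W m ≤ U i) ∧ ¬ W n ≤ U i :=
    fun i => stmt7_vec_spec T W hfd hinv hunion hrank (C i)
  -- monotonicity of the chain
  have hle : ∀ i, U i ≤ U (i + 1) := fun i => (hUsucc i) ▸ le_sup_left
  have hmonoU : Monotone U := monotone_nat_of_le_succ hle
  -- U n = span of the first n vectors
  have hUspan : ∀ n, U n = Submodule.span k (v '' Set.Iio n) := by
    intro n
    induction n with
    | zero =>
      rw [hU0, show Set.Iio (0 : ℕ) = ∅ by ext m; simp, Set.image_empty, Submodule.span_empty]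
    | succ n ih =>
      rw [hUsucc n, ih]
      have : Set.Iio (n + 1) = insert n (Set.Iio n) := by
        ext m; simp only [Set.mem_Iio, Set.mem_insert_iff, Set.mem_setOf_eq]; omega
      rw [this, Set.image_insert_eq, Submodule.span_insert]
      rw [sup_comm]
  -- dimension grows
  have hdim : ∀ i, i ≤ Module.finrank k (U i) := by
    intro i
    induction i with
    | zero => simp
    | succ i ih =>
      haveI : FiniteDimensional k (U (i + 1)) := (C (i + 1)).fin
      have hlt : U i < U (i + 1) := by
        refine lt_of_le_of_ne (hle i) fun h => (hspec i).1 ?_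
        rw [h, hUsucc i]
        exact le_sup_right (α := Submodule k V) (Submodule.mem_span_singleton_self _)
      have := Submodule.finrank_lt_finrank_of_lt hlt
      omega
  -- every W n is eventually contained in U i
  have habs : ∀ n, ∃ i, W n ≤ U i := by
    intro n
    induction n using Nat.strong_induction_on with
    | _ n IH =>
      by_contra hcon
      push_neg at hcon
      -- pick i₀ with all smaller W's contained
      have h0 : ∃ i₀, ∀ m, m < n → W m ≤ U i₀ := by
        rcases n with - | n
        · exact ⟨0, fun m hm => absurd hm (Nat.not_lt_zero m)⟩
        · obtain ⟨i₀, hi₀⟩ := IH n (Nat.lt_succ_self n)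
          exact ⟨i₀, fun m hm => (hmono (Nat.lt_succ_iff.1 hm)).trans hi₀⟩
      obtain ⟨i₀, hi₀⟩ := h0
      -- for i ≥ i₀, the chosen index is exactly n, so v i ∈ W n ⊔ U i
      have hstep : ∀ j, U (i₀ + j) ≤ W n ⊔ U i₀ := by
        intro j
        induction j with
        | zero => simp
        | succ j ihj =>
          obtain ⟨-, -, n', hv', hmin', hnle'⟩ := hspec (i₀ + j)
          have hn' : n' = n := by
            by_contra hne
            rcases Nat.lt_or_ge n' n with h | h
            · exact hnle' ((hi₀ n' h).trans (hmonoU (Nat.le_add_right i₀ j)))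
            · have : n < n' := lt_of_le_of_ne h (Ne.symm hne)
              exact hcon (i₀ + j) (hmin' n this)
          have h3 : U (i₀ + (j + 1)) = U (i₀ + j) ⊔ Submodule.span k {v (i₀ + j)} :=
            hUsucc (i₀ + j)
          rw [h3]
          refine sup_le ihj ?_
          rw [Submodule.span_le, Set.singleton_subset_iff]
          have h4 : v (i₀ + j) ∈ W n ⊔ U (i₀ + j) := hn' ▸ hv'
          exact (sup_le le_sup_left ihj : W n ⊔ U (i₀ + j) ≤ W n ⊔ U i₀) h4
      -- contradiction with dimension growth
      haveI : FiniteDimensional k (W n) := hfd n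
      haveI : FiniteDimensional k (U i₀) := (C i₀).fin
      haveI : FiniteDimensional k ((W n ⊔ U i₀ : Submodule k V)) := inferInstance
      set d := Module.finrank k ((W n ⊔ U i₀ : Submodule k V)) with hd
      have h1 : i₀ + (d + 1) ≤ Module.finrank k (U (i₀ + (d + 1))) := hdim _
      have h2 : Module.finrank k (U (i₀ + (d + 1))) ≤ d := by
        haveI : FiniteDimensional k (U (i₀ + (d + 1))) := (C _).fin
        exact Submodule.finrank_mono (hstep (d + 1))
      omega
  -- the supremum of the U's is ⊤
  have hsupU : ⨆ i, U i = ⊤ := by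
    rw [← top_le_iff, ← hunion]
    refine iSup_le fun n => ?_
    obtain ⟨i, hi⟩ := habs n
    exact hi.trans (le_iSup U i)
  -- v is linearly independent
  have hnotmem : ∀ i, v i ∉ Submodule.span k (v '' Set.Iio i) := fun i =>
    (hUspan i) ▸ (hspec i).1
  have hli : LinearIndependent k v := by
    rw [linearIndependent_iff']
    intro s g hg i hi
    by_contra hgi
    -- consider the largest index with nonzero coefficient
    have hne : (s.filter fun j => g j ≠ 0).Nonempty := ⟨i, Finset.mem_filter.2 ⟨hi, hgi⟩⟩
    set t := s.filter fun j => g j ≠ 0 with ht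
    set i₀ := t.max' hne with hi₀
    have hi₀t : i₀ ∈ t := t.max'_mem hne
    have hgsum : ∑ j ∈ t, g j • v j = 0 := by
      rw [← hg, ht]
      exact Finset.sum_filter_of_ne fun x _ h h0 => h (by simp [h0])
    have hgi₀ : g i₀ ≠ 0 := (Finset.mem_filter.1 hi₀t).2
    have heq : g i₀ • v i₀ = -∑ j ∈ t.erase i₀, g j • v j := by
      have h := Finset.add_sum_erase t (fun j => g j • v j) hi₀t
      rw [← h] at hgsum
      rw [eq_neg_iff_add_eq_zero]
      exact hgsum
    have hmem : v i₀ ∈ Submodule.span k (v '' Set.Iio i₀) := by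
      have h2 : v i₀ = (g i₀)⁻¹ • (g i₀ • v i₀) := by
        rw [smul_smul, inv_mul_cancel₀ hgi₀, one_smul]
      rw [h2, heq]
      refine Submodule.smul_mem _ _ (Submodule.neg_mem _ (Submodule.sum_mem _ ?_))
      intro j hj
      have hjlt : j < i₀ := by
        rcases Finset.mem_erase.1 hj with ⟨hne', hjt⟩
        exact lt_of_le_of_ne (t.le_max' j hjt) hne'
      exact Submodule.smul_mem _ _ (Submodule.subset_span ⟨j, hjlt, rfl⟩)
    exact hnotmem i₀ hmem
  -- v spans
  have hspan : Submodule.span k (Set.range v) = ⊤ := by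
    rw [← top_le_iff, ← hsupU]
    refine iSup_le fun i => ?_
    rw [hUspan i]
    exact Submodule.span_mono (Set.image_subset_range v _)
  -- assemble the basis
  refine ⟨Module.Basis.mk hli (le_of_eq hspan.symm), fun i => ?_⟩
  have hb : ∀ j, (Module.Basis.mk hli (le_of_eq hspan.symm)) j = v j := fun j => Module.Basis.mk_apply _ _ j
  have himg : (Module.Basis.mk hli (le_of_eq hspan.symm)) '' Set.Iic i = v '' Set.Iio (i + 1) := by
    rw [show Set.Iic i = Set.Iio (i + 1) by ext m; simp [Nat.lt_succ_iff]]
    exact Set.image_congr fun j _ => hb j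
  rw [hb i, himg, ← hUspan (i + 1), hUsucc i]
  exact (hspec i).2.1
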